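/- For all real α, β with 0 < β ≤ α < π/2, the function F(α) := (π − 2β)·cos α − (π − 2α)·cos β is nonnegative, i.e., (π − 2α)/cos α ≤ (π − 2β)/cos β, with strict inequality when β < α. -/

import Mathlib

open Real

lemma bulging_deriv_neg (x : ℝ) (hx : x ∈ Set.Ioo 0 (π/2)) :
    deriv (fun x : ℝ => (π - 2*x) / Real.cos x) x < 0 := by
  obtain ⟨hx0, hx2⟩ := hx
  have hc : 0 < Real.cos x := Real.cos_pos_of_mem_Ioo ⟨by linarith [pi_pos], hx2⟩
  have hs : 0 < Real.sin x := Real.sin_pos_of_pos_of_lt_pi hx0 (by linarith [pi_pos])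
  have h1 : HasDerivAt (fun x : ℝ => π - 2*x) (-2) x := by
    simpa using ((hasDerivAt_id x).const_mul (2:ℝ)).const_sub π
  have h3 := h1.div (Real.hasDerivAt_cos x) (ne_of_gt hc)
  have h3' : HasDerivAt (fun x : ℝ => (π - 2*x) / Real.cos x) _ x := h3
  rw [h3'.deriv]
  apply div_neg_of_neg_of_pos
  · have hφ0 : 0 < π/2 - x := by linarith
    have ht := Real.lt_tan hφ0 (by linarith)
    rw [Real.tan_eq_sin_div_cos, Real.sin_pi_div_two_sub, Real.cos_pi_div_two_sub] at ht
    have key : (π/2 - x) * Real.sin x < Real.cos x := by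
      rw [← lt_div_iff₀ hs]; exact ht
    nlinarith
  · positivity

lemma bulging_anti : StrictAntiOn (fun x : ℝ => (π - 2*x) / Real.cos x) (Set.Ico 0 (π/2)) := by
  apply strictAntiOn_of_deriv_neg (convex_Ico _ _)
  · apply ContinuousOn.div (by fun_prop) (by fun_prop)
    intro x hx
    exact ne_of_gt (Real.cos_pos_of_mem_Ioo ⟨by linarith [pi_pos, hx.1], hx.2⟩)
  · rw [interior_Ico]; exact bulging_deriv_neg

theorem bulging_monotone (α β : ℝ) (h0 : 0 < β) (hba : β ≤ α) (ha : α < π / 2) :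
    (π - 2 * β) * Real.cos α - (π - 2 * α) * Real.cos β ≥ 0 ∧
    (π - 2 * α) / Real.cos α ≤ (π - 2 * β) / Real.cos β ∧
    (β < α → (π - 2 * α) / Real.cos α < (π - 2 * β) / Real.cos β) := by
  have hcα : 0 < Real.cos α := Real.cos_pos_of_mem_Ioo ⟨by linarith [pi_pos], ha⟩
  have hcβ : 0 < Real.cos β := Real.cos_pos_of_mem_Ioo ⟨by linarith [pi_pos], by linarith⟩
  rcases eq_or_lt_of_le hba with rfl | hlt
  · refine ⟨by simp, le_refl _, fun h => absurd h (lt_irrefl _)⟩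
  · have hf := bulging_anti ⟨le_of_lt h0, by linarith⟩ ⟨by linarith, ha⟩ hlt
    simp only at hf
    have hmul : (π - 2*α) * Real.cos β < (π - 2*β) * Real.cos α :=
      (div_lt_div_iff₀ hcα hcβ).mp hf
    exact ⟨by linarith, le_of_lt hf, fun _ => hf⟩
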